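/- Let f : (0,∞) → ℝ be non-decreasing and concave, p̂ ∈ Δ(V) with p̂_1 ≥ … ≥ p̂_d > 0, and 0 < ε < p̂_d. Write g⁻(x) = f(x) − f(x − ε), g⁺(x) = f(x + ε) − f(x), and for q ∈ Δ(V) let Φ(q) = −Σ_i q_i f(p̂_i) + max_{i ≠ j} { q_i g⁻(p̂_i) − q_j g⁺(p̂_j) }. If q↓ denotes the decreasing rearrangement of q (so q↓_1 ≥ … ≥ q↓_d), then Φ(q↓) ≤ Φ(q). Consequently, the minimization of Φ over Δ(V) admits a minimizer whose entries are sorted in decreasing order. -/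

import Mathlib

open Finset

lemma concave_submod (f : ℝ → ℝ) (hconc : ConcaveOn ℝ (Set.Ioi 0) f)
    {x y h : ℝ} (hx : 0 < x) (hxy : x ≤ y) (hh : 0 ≤ h) :
    f x + f (y + h) ≤ f (x + h) + f y := by
  rcases eq_or_lt_of_le hxy with rfl | hxy
  · linarith
  rcases eq_or_lt_of_le hh with rfl | hh
  · simp
  have hD : (0:ℝ) < y + h - x := by linarith
  have hD' : y + h - x ≠ 0 := hD.ne'
  have ht0 : 0 < h / (y + h - x) := div_pos hh hD
  have ht1 : h / (y + h - x) < 1 := by rw [div_lt_one hD]; linarith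
  have hy0 : (0:ℝ) < y + h := by linarith
  have e1 : (1 - h / (y + h - x)) * x + (h / (y + h - x)) * (y + h) = x + h := by
    field_simp
    ring
  have e2 : (h / (y + h - x)) * x + (1 - h / (y + h - x)) * (y + h) = y := by
    field_simp
    ring
  have c1 := hconc.2 (Set.mem_Ioi.2 hx) (Set.mem_Ioi.2 hy0)
    (by linarith : (0:ℝ) ≤ 1 - h / (y + h - x)) ht0.le (by ring)
  have c2 := hconc.2 (Set.mem_Ioi.2 hx) (Set.mem_Ioi.2 hy0)
    ht0.le (by linarith : (0:ℝ) ≤ 1 - h / (y + h - x)) (by ring)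
  simp only [smul_eq_mul] at c1 c2
  rw [e1] at c1
  rw [e2] at c2
  linarith

lemma sup_compare {d : ℕ} (a b q : Fin d → ℝ)
    (ha : ∀ i j : Fin d, i ≤ j → a i ≤ a j) (hb : ∀ i j : Fin d, i ≤ j → b i ≤ b j)
    (ha0 : ∀ i, 0 ≤ a i) (hb0 : ∀ i, 0 ≤ b i) (hq0 : ∀ i, 0 ≤ q i)
    (σ : Equiv.Perm (Fin d)) (hanti : ∀ i j : Fin d, i ≤ j → q (σ j) ≤ q (σ i)) :
    sSup {x : ℝ | ∃ i j : Fin d, i ≠ j ∧ x = q (σ i) * a i - q (σ j) * b j}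
      ≤ sSup {x : ℝ | ∃ i j : Fin d, i ≠ j ∧ x = q i * a i - q j * b j} := by
  by_cases hpair : ∃ i j : Fin d, i ≠ j
  · obtain ⟨i0, j0, hij0⟩ := hpair
    have hbdd : BddAbove {x : ℝ | ∃ i j : Fin d, i ≠ j ∧ x = q i * a i - q j * b j} := by
      have hsub : {x : ℝ | ∃ i j : Fin d, i ≠ j ∧ x = q i * a i - q j * b j} ⊆
          Set.range (fun p : Fin d × Fin d => q p.1 * a p.1 - q p.2 * b p.2) := by
        rintro x ⟨i, j, _, rfl⟩; exact ⟨(i, j), rfl⟩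
      exact (Set.finite_range _).bddAbove.mono hsub
    refine csSup_le ⟨q (σ i0) * a i0 - q (σ j0) * b j0, i0, j0, hij0, rfl⟩ ?_
    rintro x ⟨i, j, hij, rfl⟩
    have hA : ∃ m : Fin d, m ≤ i ∧ i ≤ σ m := by
      by_contra hcon
      push_neg at hcon
      have hsub : (Finset.Iic i).image σ ⊆ Finset.Iio i := by
        intro x hx
        simp only [Finset.mem_image, Finset.mem_Iic] at hx
        obtain ⟨m, hm, rfl⟩ := hx
        exact Finset.mem_Iio.2 (hcon m hm)
      have hcard := Finset.card_le_card hsub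
      rw [Finset.card_image_of_injective _ σ.injective, Fin.card_Iic, Fin.card_Iio] at hcard
      omega
    have hB : ∃ m : Fin d, j ≤ m ∧ σ m ≤ j := by
      by_contra hcon
      push_neg at hcon
      have hsub : (Finset.Ici j).image σ ⊆ Finset.Ioi j := by
        intro x hx
        simp only [Finset.mem_image, Finset.mem_Ici] at hx
        obtain ⟨m, hm, rfl⟩ := hx
        exact Finset.mem_Ioi.2 (hcon m hm)
      have hcard := Finset.card_le_card hsub
      rw [Finset.card_image_of_injective _ σ.injective, Fin.card_Ici, Fin.card_Ioi] at hcard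
      have hj := j.isLt
      omega
    obtain ⟨m1, hm1, hk⟩ := hA
    obtain ⟨m2, hm2, hl⟩ := hB
    have hkl : σ m1 ≠ σ m2 := by
      intro hEq
      have hm12 : m1 = m2 := σ.injective hEq
      exact hij (le_antisymm (le_trans hk (hEq ▸ hl)) (le_trans hm2 (hm12 ▸ hm1)))
    refine le_trans ?_ (le_csSup hbdd ⟨σ m1, σ m2, hkl, rfl⟩)
    have h1 : q (σ i) * a i ≤ q (σ m1) * a (σ m1) :=
      mul_le_mul (hanti m1 i hm1) (ha i (σ m1) hk) (ha0 i) (hq0 (σ m1))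
    have h2 : q (σ m2) * b (σ m2) ≤ q (σ j) * b j :=
      mul_le_mul (hanti j m2 hm2) (hb (σ m2) j hl) (hb0 (σ m2)) (hq0 (σ j))
    linarith
  · push_neg at hpair
    have h1 : {x : ℝ | ∃ i j : Fin d, i ≠ j ∧ x = q (σ i) * a i - q (σ j) * b j} = ∅ := by
      ext x
      simp only [Set.mem_setOf_eq, Set.mem_empty_iff_false, iff_false, not_exists]
      intro i j hij
      exact absurd (hpair i j) hij.1
    have h2 : {x : ℝ | ∃ i j : Fin d, i ≠ j ∧ x = q i * a i - q j * b j} = ∅ := by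
      ext x
      simp only [Set.mem_setOf_eq, Set.mem_empty_iff_false, iff_false, not_exists]
      intro i j hij
      exact absurd (hpair i j) hij.1
    rw [h1, h2]

def simplex (d : ℕ) : Set (Fin d → ℝ) := {p | (∀ i, 0 ≤ p i) ∧ ∑ i, p i = 1}

/-- The regularized objective
`Φ(q) = −Σ_i q_i f(p̂_i) + max_{i ≠ j} { q_i g⁻(p̂_i) − q_j g⁺(p̂_j) }`. -/
noncomputable def Phi {d : ℕ} (f : ℝ → ℝ) (phat : Fin d → ℝ) (ε : ℝ) (q : Fin d → ℝ) : ℝ :=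
  -(∑ i, q i * f (phat i))
    + sSup {x : ℝ | ∃ i j : Fin d, i ≠ j ∧
        x = q i * (f (phat i) - f (phat i - ε)) - q j * (f (phat j + ε) - f (phat j))}

/-- rearranging `q` in decreasing order does not increase `Φ`;
consequently `Φ` admits a decreasing minimizer on the simplex. -/
theorem stmt9 {d : ℕ} (hd : 0 < d) (f : ℝ → ℝ)
    (hmono : MonotoneOn f (Set.Ioi 0))
    (hconc : ConcaveOn ℝ (Set.Ioi 0) f)
    (phat : Fin d → ℝ)
    (hmem : phat ∈ simplex d)
    (hpos : ∀ i, 0 < phat i)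
    (hsort : ∀ i j : Fin d, i ≤ j → phat j ≤ phat i)
    (ε : ℝ) (hε : 0 < ε) (hεd : ε < phat ⟨d - 1, by omega⟩) :
    (∀ q ∈ simplex d, ∀ σ : Equiv.Perm (Fin d),
        (∀ i j : Fin d, i ≤ j → q (σ j) ≤ q (σ i)) →
        Phi f phat ε (q ∘ σ) ≤ Phi f phat ε q)
    ∧ ∃ qs ∈ simplex d, (∀ i j : Fin d, i ≤ j → qs j ≤ qs i)
        ∧ ∀ q ∈ simplex d, Phi f phat ε qs ≤ Phi f phat ε q := by
  -- basic positivity facts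
  have hεi : ∀ i : Fin d, ε < phat i := by
    intro i
    refine lt_of_lt_of_le hεd (hsort i ⟨d - 1, by omega⟩ ?_)
    have hlt := i.isLt
    have hle : (i : ℕ) ≤ d - 1 := by omega
    exact Fin.le_def.2 (by simpa using hle)
  have hmem1 : ∀ i, phat i ∈ Set.Ioi (0:ℝ) := fun i => Set.mem_Ioi.2 (hpos i)
  have hmem2 : ∀ i, phat i - ε ∈ Set.Ioi (0:ℝ) := fun i => Set.mem_Ioi.2 (by linarith [hεi i])
  have hmem3 : ∀ i, phat i + ε ∈ Set.Ioi (0:ℝ) := fun i => Set.mem_Ioi.2 (by linarith [hpos i])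
  have ha0 : ∀ i : Fin d, 0 ≤ f (phat i) - f (phat i - ε) := fun i =>
    sub_nonneg.2 (hmono (hmem2 i) (hmem1 i) (by linarith))
  have hb0 : ∀ i : Fin d, 0 ≤ f (phat i + ε) - f (phat i) := fun i =>
    sub_nonneg.2 (hmono (hmem1 i) (hmem3 i) (by linarith))
  have hamono : ∀ i j : Fin d, i ≤ j →
      f (phat i) - f (phat i - ε) ≤ f (phat j) - f (phat j - ε) := by
    intro i j hij
    have hsub := concave_submod f hconc (x := phat j - ε) (y := phat i - ε) (h := ε)
      (by linarith [hεi j]) (by linarith [hsort i j hij]) hε.le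
    have e1 : phat j - ε + ε = phat j := by ring
    have e2 : phat i - ε + ε = phat i := by ring
    rw [e1, e2] at hsub
    linarith
  have hbmono : ∀ i j : Fin d, i ≤ j →
      f (phat i + ε) - f (phat i) ≤ f (phat j + ε) - f (phat j) := by
    intro i j hij
    have hsub := concave_submod f hconc (x := phat j) (y := phat i) (h := ε)
      (hpos j) (hsort i j hij) hε.le
    linarith
  have part1 : ∀ q ∈ simplex d, ∀ σ : Equiv.Perm (Fin d),
      (∀ i j : Fin d, i ≤ j → q (σ j) ≤ q (σ i)) →
      Phi f phat ε (q ∘ σ) ≤ Phi f phat ε q := by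
    intro q hq σ hanti
    have hq0 : ∀ i, 0 ≤ q i := hq.1
    unfold Phi
    refine add_le_add (neg_le_neg ?_) ?_
    · -- rearrangement inequality
      have hmv : Monovary (q ∘ σ) (fun i => f (phat i)) := by
        intro i j hlt
        rcases le_total i j with h | h
        · exact absurd hlt (not_lt.2 (hmono (hmem1 j) (hmem1 i) (hsort i j h)))
        · exact hanti j i h
      calc ∑ i, q i * f (phat i)
          = ∑ i, (q ∘ σ) i * f (phat (σ i)) :=
            (Equiv.sum_comp σ (fun i => q i * f (phat i))).symm
        _ ≤ ∑ i, (q ∘ σ) i * f (phat i) := hmv.sum_mul_comp_perm_le_sum_mul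
    · exact sup_compare (fun i => f (phat i) - f (phat i - ε))
        (fun i => f (phat i + ε) - f (phat i)) q hamono hbmono ha0 hb0 hq0 σ hanti
  refine ⟨part1, ?_⟩
  rcases Nat.lt_or_ge d 2 with h2 | h2
  · -- d = 1
    have hd1 : d = 1 := by omega
    subst hd1
    refine ⟨fun _ => 1, ⟨fun _ => zero_le_one, by simp⟩, fun i j _ => le_refl _, ?_⟩
    intro q hq
    have hq1 : q = fun _ => (1:ℝ) := by
      funext i
      have hs := hq.2
      rw [Fin.sum_univ_one] at hs
      have hi : i = 0 := Subsingleton.elim i 0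
      rw [hi, hs]
    rw [hq1]
  · -- d ≥ 2 : compactness argument
    have hDne : (Finset.univ.offDiag : Finset (Fin d × Fin d)).Nonempty := by
      refine ⟨(⟨0, by omega⟩, ⟨1, by omega⟩), ?_⟩
      rw [Finset.mem_offDiag]
      exact ⟨Finset.mem_univ _, Finset.mem_univ _, by simp [Fin.ext_iff]⟩
    have hbdd : ∀ q : Fin d → ℝ, BddAbove {x : ℝ | ∃ i j : Fin d, i ≠ j ∧
        x = q i * (f (phat i) - f (phat i - ε)) - q j * (f (phat j + ε) - f (phat j))} := by
      intro q
      have hsub : {x : ℝ | ∃ i j : Fin d, i ≠ j ∧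
          x = q i * (f (phat i) - f (phat i - ε)) - q j * (f (phat j + ε) - f (phat j))} ⊆
          Set.range (fun p : Fin d × Fin d =>
            q p.1 * (f (phat p.1) - f (phat p.1 - ε)) - q p.2 * (f (phat p.2 + ε) - f (phat p.2))) := by
        rintro x ⟨i, j, _, rfl⟩; exact ⟨(i, j), rfl⟩
      exact (Set.finite_range _).bddAbove.mono hsub
    have key : ∀ q : Fin d → ℝ,
        sSup {x : ℝ | ∃ i j : Fin d, i ≠ j ∧
          x = q i * (f (phat i) - f (phat i - ε)) - q j * (f (phat j + ε) - f (phat j))}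
        = (Finset.univ.offDiag).sup' hDne (fun p =>
            q p.1 * (f (phat p.1) - f (phat p.1 - ε)) - q p.2 * (f (phat p.2 + ε) - f (phat p.2))) := by
      intro q
      apply le_antisymm
      · obtain ⟨p0, hp0⟩ := hDne
        refine csSup_le ⟨_, p0.1, p0.2, (Finset.mem_offDiag.1 hp0).2.2, rfl⟩ ?_
        rintro x ⟨i, j, hij, rfl⟩
        exact Finset.le_sup' (fun p : Fin d × Fin d =>
            q p.1 * (f (phat p.1) - f (phat p.1 - ε)) - q p.2 * (f (phat p.2 + ε) - f (phat p.2)))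
          (show (i, j) ∈ Finset.univ.offDiag from
          Finset.mem_offDiag.2 ⟨Finset.mem_univ i, Finset.mem_univ j, hij⟩)
      · refine Finset.sup'_le _ _ ?_
        intro p hp
        exact le_csSup (hbdd q) ⟨p.1, p.2, (Finset.mem_offDiag.1 hp).2.2, rfl⟩
    have hcont : Continuous (Phi f phat ε) := by
      unfold Phi
      refine Continuous.add ?_ ?_
      · exact (continuous_finset_sum _ fun i _ => (continuous_apply i).mul continuous_const).neg
      · have hfun : (fun q : Fin d → ℝ => sSup {x : ℝ | ∃ i j : Fin d, i ≠ j ∧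
            x = q i * (f (phat i) - f (phat i - ε)) - q j * (f (phat j + ε) - f (phat j))})
            = fun q : Fin d → ℝ => (Finset.univ.offDiag).sup' hDne (fun p =>
              q p.1 * (f (phat p.1) - f (phat p.1 - ε))
                - q p.2 * (f (phat p.2 + ε) - f (phat p.2))) := funext key
        rw [hfun]
        exact Continuous.finset_sup'_apply hDne (fun p _ =>
          ((continuous_apply p.1).mul continuous_const).sub
            ((continuous_apply p.2).mul continuous_const))
    have hsimplex : simplex d = stdSimplex ℝ (Fin d) := rfl
    have hne : (simplex d).Nonempty := by
      refine ⟨fun _ => (d:ℝ)⁻¹, fun _ => by positivity, ?_⟩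
      rw [Finset.sum_const, Finset.card_univ, Fintype.card_fin, nsmul_eq_mul]
      rw [mul_inv_cancel₀ (by exact_mod_cast (by omega : d ≠ 0))]
    obtain ⟨qm, hqm, hqmin⟩ := (hsimplex ▸ isCompact_stdSimplex ℝ (Fin d)).exists_isMinOn hne
      hcont.continuousOn
    set σ := Tuple.sort (fun i => -(qm i)) with hσ
    have hmonot := Tuple.monotone_sort (fun i => -(qm i))
    have hsorted : ∀ i j : Fin d, i ≤ j → qm (σ j) ≤ qm (σ i) := by
      intro i j hij
      have := hmonot hij
      simp only [Function.comp_apply] at this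
      linarith
    refine ⟨qm ∘ σ, ⟨fun i => hqm.1 (σ i), (Equiv.sum_comp σ qm).trans hqm.2⟩,
      fun i j hij => hsorted i j hij, ?_⟩
    intro q hq
    exact le_trans (part1 qm hqm σ hsorted) (isMinOn_iff.1 hqmin q hq)
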